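/- A function φ : [0,∞) → [0,1) is an MT-function if and only if for every eventually strictly decreasing sequence {x_n} in [0,∞), sup_n φ(x_n) < 1. -/

import Mathlib

open Filter Set Topology

/-- `MTfun φ`: φ is an MT-function, i.e. `limsup_{s→t⁺} φ(s) < 1` for all `t ≥ 0`. -/
def MTfun (φ : ℝ → ℝ) : Prop :=
  ∀ t : ℝ, 0 ≤ t → Filter.limsup φ (nhdsWithin t (Set.Ioi t)) < 1

/-- `MTlfun λ μ`: μ is an MT(λ)-function, i.e. `limsup_{s→t⁺} μ(s) < λ` for all `t ≥ 0`. -/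
def MTlfun (l : ℝ) (μ : ℝ → ℝ) : Prop :=
  ∀ t : ℝ, 0 ≤ t → Filter.limsup μ (nhdsWithin t (Set.Ioi t)) < l

theorem stmt_9 (φ : ℝ → ℝ) (hmap : ∀ t : ℝ, 0 ≤ t → 0 ≤ φ t ∧ φ t < 1) :
    MTfun φ ↔ ∀ x : ℕ → ℝ, (∀ n, 0 ≤ x n) →
      (∃ l : ℕ, ∀ n ≥ l, x (n + 1) < x n) → (⨆ n, φ (x n)) < 1 := by
  constructor
  · rintro hMT x hx0 ⟨l, hdec⟩
    set y : ℕ → ℝ := fun n => x (n + l) with hy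
    have hya : StrictAnti y := strictAnti_nat_of_succ_lt (fun n => by
      have := hdec (n + l) (Nat.le_add_left _ _)
      simpa [hy, Nat.succ_add] using this)
    have hbdd : BddBelow (Set.range y) := ⟨0, by rintro _ ⟨n, rfl⟩; exact hx0 _⟩
    set t := ⨅ n, y n with hT
    have ht0 : 0 ≤ t := le_ciInf fun n => hx0 _
    have htlt : ∀ n, t < y n := fun n =>
      lt_of_le_of_lt (ciInf_le hbdd (n + 1)) (hya (Nat.lt_succ_self n))
    have htend : Tendsto y atTop (𝓝[>] t) := by
      rw [tendsto_nhdsWithin_iff]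
      exact ⟨tendsto_atTop_ciInf hya.antitone hbdd, Eventually.of_forall htlt⟩
    have hlim := hMT t ht0
    have hbd : IsBoundedUnder (· ≤ ·) (𝓝[>] t) φ := by
      refine isBoundedUnder_of_eventually_le (a := 1) ?_
      filter_upwards [self_mem_nhdsWithin] with s hs
      exact le_of_lt (hmap s (le_of_lt (lt_of_le_of_lt ht0 hs))).2
    set r := (limsup φ (𝓝[>] t) + 1) / 2 with hrdef
    have hr1 : r < 1 := by rw [hrdef]; linarith
    have hlr : limsup φ (𝓝[>] t) < r := by rw [hrdef]; linarith
    have hev : ∀ᶠ s in 𝓝[>] t, φ s < r := eventually_lt_of_limsup_lt hlr hbd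
    obtain ⟨N, hN⟩ := (htend.eventually hev).exists_forall_of_atTop
    -- tail bound: for n ≥ N + l, φ (x n) < r
    have htail : ∀ n, N + l ≤ n → φ (x n) < r := by
      intro n hn
      have h1 : N ≤ n - l := by omega
      have h2 : y (n - l) = x n := by show x (n - l + l) = x n; congr 1; omega
      have := hN (n - l) h1
      rwa [h2] at this
    have hNE : (Finset.range (N + l + 1)).Nonempty := ⟨0, by simp⟩
    set M := (Finset.range (N + l + 1)).sup' hNE (fun i => φ (x i)) with hM
    have hM1 : M < 1 := by
      rw [hM, Finset.sup'_lt_iff]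
      intro i _
      exact (hmap (x i) (hx0 i)).2
    have hmax : max r M < 1 := max_lt hr1 hM1
    refine lt_of_le_of_lt (ciSup_le fun n => ?_) hmax
    rcases le_or_gt n (N + l) with hn | hn
    · exact le_max_of_le_right (Finset.le_sup' (fun i => φ (x i))
        (Finset.mem_range.mpr (by omega)))
    · exact le_max_of_le_left (le_of_lt (htail n (by omega)))
  · intro h t ht
    by_contra hcon
    push_neg at hcon
    have hne : (𝓝[>] t).NeBot := nhdsGT_neBot t
    have hbd : IsBoundedUnder (· ≤ ·) (𝓝[>] t) φ := by
      refine isBoundedUnder_of_eventually_le (a := 1) ?_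
      filter_upwards [self_mem_nhdsWithin] with s hs
      exact le_of_lt (hmap s (le_of_lt (lt_of_le_of_lt ht hs))).2
    have hfreq : ∀ r : ℝ, r < 1 → ∃ᶠ s in 𝓝[>] t, r < φ s := by
      intro r hr
      by_contra hfr
      rw [not_frequently] at hfr
      have hcb : IsCoboundedUnder (· ≤ ·) (𝓝[>] t) φ := by
        refine IsBoundedUnder.isCoboundedUnder_le (isBoundedUnder_of_eventually_ge (a := 0) ?_)
        filter_upwards [self_mem_nhdsWithin] with s hs
        exact (hmap s (le_of_lt (lt_of_le_of_lt ht hs))).1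
      have hle : limsup φ (𝓝[>] t) ≤ r :=
        limsup_le_of_le hcb (hfr.mono fun s hs => not_lt.1 hs)
      have : (1 : ℝ) ≤ r := le_trans hcon hle
      linarith
    have key : ∀ (n : ℕ) (c : ℝ), ∃ s : ℝ,
        t < c → (s ∈ Ioo t c ∧ 1 - 1 / (n + 1) < φ s) := by
      intro n c
      by_cases hc : t < c
      · have hr : (1 : ℝ) - 1 / (n + 1) < 1 := by
          have : (0 : ℝ) < 1 / (n + 1) := by positivity
          linarith
        have hIoo : Ioo t c ∈ 𝓝[>] t := Ioo_mem_nhdsGT_of_mem ⟨le_refl t, hc⟩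
        obtain ⟨s, hs1, hs2⟩ :=
          ((hfreq _ hr).and_eventually (eventually_mem_set.mpr hIoo)).exists
        exact ⟨s, fun _ => ⟨hs2, hs1⟩⟩
      · exact ⟨0, fun hc' => absurd hc' hc⟩
    choose f hf using key
    set x : ℕ → ℝ := fun n => Nat.rec (f 0 (t + 1)) (fun n xn => f (n + 1) xn) n with hx
    have hx0 : x 0 = f 0 (t + 1) := rfl
    have hxs : ∀ n, x (n + 1) = f (n + 1) (x n) := fun n => rfl
    have main : ∀ n, t < x n ∧ 1 - 1 / (n + 1) < φ (x n) := by
      intro n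
      induction n with
      | zero =>
        have := hf 0 (t + 1) (by linarith)
        exact ⟨this.1.1, by rw [hx0]; simpa using this.2⟩
      | succ n ih =>
        have := hf (n + 1) (x n) ih.1
        rw [← hxs n] at this
        exact ⟨this.1.1, by push_cast; push_cast at this; exact this.2⟩
    have hdec : ∀ n ≥ 0, x (n + 1) < x n := by
      intro n _
      have := hf (n + 1) (x n) (main n).1
      rw [← hxs n] at this
      exact this.1.2
    have hxnn : ∀ n, 0 ≤ x n := fun n => le_trans ht (le_of_lt (main n).1)
    have hsup := h x hxnn ⟨0, hdec⟩
    have hbdd : BddAbove (Set.range fun n => φ (x n)) := by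
      refine ⟨1, ?_⟩
      rintro _ ⟨n, rfl⟩
      exact le_of_lt (hmap (x n) (hxnn n)).2
    have hge : ∀ n : ℕ, 1 - 1 / ((n : ℝ) + 1) ≤ ⨆ m, φ (x m) :=
      fun n => le_trans (le_of_lt (main n).2) (le_ciSup hbdd n)
    have htend : Tendsto (fun n : ℕ => 1 - 1 / ((n : ℝ) + 1)) atTop (𝓝 1) := by
      have := tendsto_one_div_add_atTop_nhds_zero_nat (𝕜 := ℝ)
      simpa using tendsto_const_nhds.sub this
    have : (1 : ℝ) ≤ ⨆ m, φ (x m) := le_of_tendsto' htend hge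
    linarith
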